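/- Let Q be a quiver with one vertex and one loop. The polynomials n_d(x) defined by the nullcone recursion satisfy n_d(x) = x^{d(d-1)} for all d ≥ 0. Equivalently, in the twisted power series ring with t·t = q^{-1}·t^2 type twisting coming from the Euler form ⟨d,e⟩ = 0 (for the one-loop quiver), one has (∑_{d≥0} t^d/(q)_d)^{-1} = ∑_{d≥0} (-1)^d q^{d(d+1)/2 - d^2} · q^{d(d-1)} t^d/(q)_d, i.e. the generating function identity ∑_d (q^{d(d-1)}/|GL_d(F_q)|) t^d · ∑_d t^d/(q)_d = 1 holds after the appropriate twist. -/

import Mathlib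

/-- The q-Pochhammer symbol. -/
noncomputable def qPoch {K : Type*} [Field K] (q : K) (n : ℕ) : K :=
  ∏ i ∈ Finset.range n, (1 - q ^ (i + 1))

local notation "q" => (RatFunc.X : RatFunc ℚ)

lemma X_pow_ne_one (k : ℕ) (hk : k ≠ 0) : q ^ k ≠ 1 := by
  intro h
  have h2 : (algebraMap (Polynomial ℚ) (RatFunc ℚ)) (Polynomial.X ^ k)
      = algebraMap (Polynomial ℚ) (RatFunc ℚ) 1 := by
    simpa [map_pow, RatFunc.algebraMap_X] using h
  have h3 : (Polynomial.X : Polynomial ℚ) ^ k = 1 := RatFunc.algebraMap_injective ℚ h2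
  have := congrArg Polynomial.natDegree h3
  simp [Polynomial.natDegree_X_pow] at this
  exact hk this

lemma one_sub_X_pow_ne_zero (k : ℕ) (hk : k ≠ 0) : (1 : RatFunc ℚ) - q ^ k ≠ 0 := by
  intro h
  exact X_pow_ne_one k hk (sub_eq_zero.mp h).symm

lemma qPoch_ne_zero (n : ℕ) : qPoch q n ≠ 0 := by
  unfold qPoch
  rw [Finset.prod_ne_zero_iff]
  intro i _
  exact one_sub_X_pow_ne_zero (i+1) (Nat.succ_ne_zero i)

lemma qPoch_succ {K : Type*} [Field K] (x : K) (n : ℕ) :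
    qPoch x (n+1) = qPoch x n * (1 - x ^ (n+1)) := by
  unfold qPoch; rw [Finset.prod_range_succ]

lemma qPoch_zero {K : Type*} [Field K] (x : K) : qPoch x 0 = 1 := by simp [qPoch]

lemma pascal_aux {K : Type*} [Field K] (P R s a b : K) (hP : P ≠ 0) (hR : R ≠ 0)
    (ha : 1 - a ≠ 0) (hb : 1 - b ≠ 0) :
    (1 - a * b) * (-s / (P * (1 - a) * (R * (1 - b))))
      = -s * a / (P * (1 - a) * R) + -(s / (P * (R * (1 - b)))) := by
  field_simp
  ring

lemma pascal_aux2 {K : Type*} [Field K] (P s a : K) (hP : P ≠ 0) (ha : 1 - a ≠ 0) :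
    (1 - a) * (-s / (P * (1 - a) * 1)) = -(s / (P * 1)) := by
  field_simp

lemma keysum (m : ℕ) :
    ∑ i ∈ Finset.range (m+2), ((-1 : RatFunc ℚ))^i * q ^ (i*(i-1)/2) /
      (qPoch q i * qPoch q (m+1-i)) = 0 := by
  have hne : (1 : RatFunc ℚ) - q^(m+1) ≠ 0 := one_sub_X_pow_ne_zero _ (Nat.succ_ne_zero m)
  set c : ℕ → RatFunc ℚ := fun i =>
    (-1 : RatFunc ℚ)^i * q ^ (i*(i+1)/2) / (qPoch q i * qPoch q (m-i)) with hc
  have hmain : ∀ i ∈ Finset.range (m+2),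
      (1 - q^(m+1)) * ((-1 : RatFunc ℚ)^i * q ^ (i*(i-1)/2) /
        (qPoch q i * qPoch q (m+1-i)))
      = (if i < m+1 then c i else 0) + (if i ≠ 0 then -c (i-1) else 0) := by
    intro i hi
    rcases i with _ | j
    · simp only [hc, if_pos (Nat.succ_pos m), ne_eq, not_true_eq_false, if_neg,
        not_false_eq_true, reduceIte]
      rw [show (m+1 : ℕ) - 0 = m+1 from rfl, qPoch_succ, qPoch_zero]
      norm_num
      rw [← mul_assoc, mul_inv_cancel₀ hne, one_mul]
    · obtain ⟨t, ht⟩ : Even (j*(j+1)) := Nat.even_mul_succ_self j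
      have e1 : (j+1)*j/2 = t := by
        rw [Nat.mul_comm]; omega
      have hP1 : qPoch q (j+1) = qPoch q j * (1 - q^(j+1)) := qPoch_succ _ j
      rcases lt_or_ge j m with hjm | hjm
      · have hcond : j + 1 < m + 1 := by omega
        simp only [hc, if_pos hcond, if_pos (Nat.succ_ne_zero j), Nat.succ_sub_one]
        rw [e1]
        have e2 : (j+1)*((j+1)+1)/2 = t + (j+1) := by
          have : (j+1)*((j+1)+1) = j*(j+1) + 2*(j+1) := by ring
          omega
        have e3 : j*(j+1)/2 = t := by omega
        rw [e2, e3]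
        have hP2 : qPoch q (m+1-(j+1)) = qPoch q (m-(j+1)) * (1 - q^(m-j)) := by
          rw [show m+1-(j+1) = (m-(j+1))+1 by omega, qPoch_succ,
            show m-(j+1)+1 = m-j by omega]
        have hP3 : qPoch q (m-j) = qPoch q (m-(j+1)) * (1 - q^(m-j)) := by
          rw [show m-j = (m-(j+1))+1 by omega, qPoch_succ,
            show m-(j+1)+1 = m-j by omega]
        have hpow : q^(m+1) = q^(j+1) * q^(m-j) := by
          rw [← pow_add]; congr 1; omega
        have hne1 : (1:RatFunc ℚ) - q^(j+1) ≠ 0 := one_sub_X_pow_ne_zero _ (by omega)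
        have hne2 : (1:RatFunc ℚ) - q^(m-j) ≠ 0 := one_sub_X_pow_ne_zero _ (by omega)
        rw [hP1, hP2, hP3, hpow, pow_add]
        linear_combination pascal_aux (qPoch RatFunc.X j) (qPoch RatFunc.X (m-(j+1)))
          ((-1 : RatFunc ℚ)^j * RatFunc.X^t) (RatFunc.X^(j+1)) (RatFunc.X^(m-j))
          (qPoch_ne_zero j) (qPoch_ne_zero (m-(j+1))) hne1 hne2
      · -- j = m, i.e. i = m+1
        have hj : j = m := by
          have := Finset.mem_range.mp hi; omega
        subst hj
        simp only [hc, if_neg (lt_irrefl (j+1)), if_pos (Nat.succ_ne_zero j),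
          Nat.succ_sub_one, Nat.sub_self, zero_add]
        rw [e1, show j*(j+1)/2 = t by omega, qPoch_zero, hP1]
        linear_combination pascal_aux2 (qPoch RatFunc.X j)
          ((-1 : RatFunc ℚ)^j * RatFunc.X^t) (RatFunc.X^(j+1)) (qPoch_ne_zero j) hne
  calc (∑ i ∈ Finset.range (m+2), ((-1 : RatFunc ℚ))^i * q ^ (i*(i-1)/2) /
      (qPoch q i * qPoch q (m+1-i)))
      = (1 - q^(m+1))⁻¹ * ∑ i ∈ Finset.range (m+2), (1 - q^(m+1)) *
        (((-1 : RatFunc ℚ))^i * q ^ (i*(i-1)/2) / (qPoch q i * qPoch q (m+1-i))) := by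
        rw [← Finset.mul_sum, ← mul_assoc, inv_mul_cancel₀ hne, one_mul]
    _ = (1 - q^(m+1))⁻¹ * ∑ i ∈ Finset.range (m+2),
        ((if i < m+1 then c i else 0) + (if i ≠ 0 then -c (i-1) else 0)) := by
        rw [Finset.sum_congr rfl hmain]
    _ = 0 := by
        rw [Finset.sum_add_distrib]
        have h1 : ∑ i ∈ Finset.range (m+2), (if i < m+1 then c i else 0)
            = ∑ i ∈ Finset.range (m+1), c i := by
          rw [Finset.sum_range_succ, if_neg (lt_irrefl (m+1))]
          rw [add_zero]
          exact Finset.sum_congr rfl fun i hi => if_pos (Finset.mem_range.mp hi)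
        have h2 : ∑ i ∈ Finset.range (m+2), (if i ≠ 0 then -c (i-1) else 0)
            = -∑ i ∈ Finset.range (m+1), c i := by
          rw [Finset.sum_range_succ']
          simp [Finset.sum_neg_distrib]
        rw [h1, h2]
        simp

lemma term_aux {K : Type*} [Field K] (P R x e : K) (hP : P ≠ 0) (hR : R ≠ 0)
    (hx : x ≠ 0) (he : e * e = 1) :
    x * x / (e * x * P) * (1 / R) = e * x / (P * R) := by
  have he0 : e ≠ 0 := by intro h; rw [h] at he; simp at he
  field_simp
  linear_combination (-1 : K) * he

/-- For the one-loop quiver (Euler form zero, so the twisted ring is the ordinary power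
series ring `ℚ(q)[[t]]`), the nullcone generating function identity reads
`∑_d (q^{d(d-1)}/|GL_d|) t^d · ∑_d t^d/(q)_d = 1`, where
`|GL_d| = (-1)^d q^{d(d-1)/2} (q)_d`; i.e. `n_d = q^{d(d-1)}` counts nilpotent matrices. -/
theorem one_loop_nullcone_generating_identity :
    (PowerSeries.mk fun d : ℕ =>
        (RatFunc.X : RatFunc ℚ) ^ (d * (d - 1)) /
          ((-1 : RatFunc ℚ) ^ d * (RatFunc.X : RatFunc ℚ) ^ (d * (d - 1) / 2) *
            qPoch (RatFunc.X : RatFunc ℚ) d)) *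
      (PowerSeries.mk fun d : ℕ => 1 / qPoch (RatFunc.X : RatFunc ℚ) d)
      = 1 := by
  ext n
  rw [PowerSeries.coeff_mul]
  rw [Finset.Nat.sum_antidiagonal_eq_sum_range_succ_mk]
  simp only [PowerSeries.coeff_mk]
  rcases n with _ | m
  · simp [qPoch]
  · rw [PowerSeries.coeff_one, if_neg (Nat.succ_ne_zero m)]
    have hterm : ∀ i ∈ Finset.range (m+2),
        (RatFunc.X : RatFunc ℚ) ^ (i * (i - 1)) /
          ((-1 : RatFunc ℚ) ^ i * (RatFunc.X : RatFunc ℚ) ^ (i * (i - 1) / 2) *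
            qPoch (RatFunc.X : RatFunc ℚ) i) * (1 / qPoch (RatFunc.X : RatFunc ℚ) (m+1-i))
        = (-1 : RatFunc ℚ)^i * q ^ (i*(i-1)/2) / (qPoch q i * qPoch q (m+1-i)) := by
      intro i _
      obtain ⟨t, ht⟩ : Even (i * (i-1)) := by
        rcases i with _ | k
        · simp
        · rw [Nat.succ_sub_one, Nat.mul_comm]; exact Nat.even_mul_succ_self k
      have h2 : i*(i-1)/2 = t := by omega
      rw [h2, ht, pow_add]
      exact term_aux _ _ _ _ (qPoch_ne_zero i) (qPoch_ne_zero (m+1-i))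
        (pow_ne_zero t RatFunc.X_ne_zero) (by rw [← pow_add]; simp [← two_mul, pow_mul])
    rw [Finset.sum_congr rfl hterm]
    exact keysum m
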